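/- Let τ : [0,S] → ℝ be C¹ with strictly increasing derivative k = τ', with |τ(s)| < π for s ∈ (0,S) and τ(0), τ(S) ∈ [-π, π]. If ∫₀ˢ sin(τ(s)) ds = 0, then τ(0) + τ(S) > 0. -/

import Mathlib

open Real

/-- Auxiliary lemma: the case `τ 0 > 0` (together with `τ 0 + τ S ≤ 0`) is contradictory. -/
private lemma vogt_aux (S : ℝ) (τ k : ℝ → ℝ) (hS : 0 < S)
    (hderiv : ∀ s, HasDerivAt τ (k s) s)
    (hk : StrictMonoOn k (Set.Icc 0 S))
    (hshort : ∀ s ∈ Set.Ioo 0 S, |τ s| < π)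
    (hα : τ 0 ∈ Set.Icc (-π) π) (hβ : τ S ∈ Set.Icc (-π) π)
    (hint : ∫ s in (0:ℝ)..S, Real.sin (τ s) = 0)
    (hα0 : 0 < τ 0) (hsum : τ 0 + τ S ≤ 0) : False := by
  have hβneg : τ S < 0 := by linarith
  have hτc : Continuous τ := continuous_iff_continuousAt.mpr fun s => (hderiv s).continuousAt
  have hd : deriv τ = k := funext fun s => (hderiv s).deriv
  -- convexity of τ
  have hconv : ConvexOn ℝ (Set.Icc 0 S) τ := by
    have hmono : MonotoneOn (deriv τ) (interior (Set.Icc 0 S)) := by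
      rw [hd, interior_Icc]
      exact hk.monotoneOn.mono Set.Ioo_subset_Icc_self
    exact hmono.convexOn_of_deriv (convex_Icc 0 S) hτc.continuousOn
      (fun x _ => (hderiv x).differentiableAt.differentiableWithinAt)
  -- a zero of τ exists
  obtain ⟨c₀, hc₀mem, hc₀⟩ : ∃ c ∈ Set.Icc 0 S, τ c = 0 := by
    obtain ⟨c, hc, hce⟩ := intermediate_value_Icc' hS.le hτc.continuousOn
      (⟨hβneg.le, hα0.le⟩ : (0:ℝ) ∈ Set.Icc (τ S) (τ 0))
    exact ⟨c, hc, hce⟩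
  -- the first zero c
  set Z : Set ℝ := Set.Icc 0 S ∩ τ ⁻¹' {0} with hZdef
  have hZne : Z.Nonempty := ⟨c₀, hc₀mem, by simpa using hc₀⟩
  have hZclosed : IsClosed Z := isClosed_Icc.inter (isClosed_singleton.preimage hτc)
  have hZbdd : BddBelow Z := ⟨0, fun x hx => hx.1.1⟩
  set c := sInf Z with hcdef
  have hcZ : c ∈ Z := hZclosed.csInf_mem hZne hZbdd
  have hcIcc : c ∈ Set.Icc 0 S := hcZ.1
  have hτczero : τ c = 0 := by simpa using hcZ.2
  have hcS : c ≤ S := hcIcc.2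
  have hc0 : 0 < c := by
    rcases hcIcc.1.lt_or_eq with h | h
    · exact h
    · exfalso; rw [← h] at hτczero; linarith
  have hcltS : c < S := lt_of_le_of_ne hcS (fun h => by rw [h] at hτczero; linarith)
  -- τ > 0 before c
  have hpos : ∀ s ∈ Set.Ico 0 c, 0 < τ s := by
    intro s hs
    by_contra hle
    push_neg at hle
    have hsS : s ≤ S := le_trans hs.2.le hcS
    obtain ⟨z, hz, hze⟩ := intermediate_value_Icc' hs.1 hτc.continuousOn
      (⟨hle, hα0.le⟩ : (0:ℝ) ∈ Set.Icc (τ s) (τ 0))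
    have hzZ : z ∈ Z := ⟨⟨hz.1, le_trans hz.2 hsS⟩, by simpa using hze⟩
    have hcz : c ≤ z := csInf_le hZbdd hzZ
    linarith [hz.2, hs.2]
  -- τ ≤ 0 after c (convexity)
  have hneg : ∀ s ∈ Set.Icc c S, τ s ≤ 0 := by
    intro s hs
    have h1 := hconv.le_on_segment hcIcc ⟨hS.le, le_refl S⟩
      (by rw [segment_eq_Icc hcS]; exact hs)
    rw [hτczero] at h1
    exact h1.trans (max_le le_rfl hβneg.le)
  -- k c < 0
  have hkc : k c < 0 := by
    by_contra hge
    push_neg at hge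
    have hmono : StrictMonoOn τ (Set.Icc c S) := by
      apply strictMonoOn_of_deriv_pos (convex_Icc c S) hτc.continuousOn
      intro x hx
      rw [interior_Icc] at hx
      rw [hd]
      have : k c < k x := hk hcIcc ⟨le_trans hcIcc.1 hx.1.le, hx.2.le⟩ hx.1
      linarith
    have := hmono ⟨le_refl c, hcS⟩ ⟨hcS, le_refl S⟩ hcltS
    rw [hτczero] at this
    linarith
  -- integrability
  have huIcc : Set.uIcc (0:ℝ) S = Set.Icc 0 S := Set.uIcc_of_le hS.le
  have hkint : IntervalIntegrable k MeasureTheory.volume 0 S := by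
    apply MonotoneOn.intervalIntegrable
    rw [huIcc]; exact hk.monotoneOn
  have hsincont : Continuous fun s => Real.sin (τ s) := Real.continuous_sin.comp hτc
  have hsinint : IntervalIntegrable (fun s => Real.sin (τ s)) MeasureTheory.volume 0 S :=
    hsincont.intervalIntegrable 0 S
  have hksin : IntervalIntegrable (fun s => k s * Real.sin (τ s)) MeasureTheory.volume 0 S :=
    hkint.mul_continuousOn hsincont.continuousOn
  -- FTC : ∫ k sin τ = cos τ0 - cos τS
  have hftc : ∫ s in (0:ℝ)..S, k s * Real.sin (τ s) = Real.cos (τ 0) - Real.cos (τ S) := by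
    have h := intervalIntegral.integral_eq_sub_of_hasDerivAt
      (f := fun s => -Real.cos (τ s)) (f' := fun s => k s * Real.sin (τ s))
      (fun s _ => by
        have h1 : HasDerivAt (fun s => -Real.cos (τ s)) _ s := ((hderiv s).cos).neg
        exact h1.congr_deriv (by ring)) hksin
    rw [h]; ring
  -- the nonnegative function g
  set g : ℝ → ℝ := fun s => (k c - k s) * Real.sin (τ s) with hgdef
  have hg_nonneg : ∀ s ∈ Set.Icc 0 S, 0 ≤ g s := by
    intro s hs
    rcases le_total s c with h | h
    · have hkle : k s ≤ k c := hk.monotoneOn hs hcIcc h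
      have hsin : 0 ≤ Real.sin (τ s) := by
        rcases eq_or_lt_of_le h with h' | hlt
        · rw [h', hτczero]; simp
        · have hτpos : 0 < τ s := hpos s ⟨hs.1, hlt⟩
          have hτle : τ s ≤ π := by
            rcases eq_or_lt_of_le hs.1 with h0 | h0
            · rw [← h0]; exact hα.2
            · exact le_of_lt (abs_lt.mp (hshort s ⟨h0, lt_of_lt_of_le hlt hcS⟩)).2
          exact Real.sin_nonneg_of_nonneg_of_le_pi hτpos.le hτle
      exact mul_nonneg (by linarith) hsin
    · have hkge : k c ≤ k s := hk.monotoneOn hcIcc hs h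
      have hτle : τ s ≤ 0 := hneg s ⟨h, hs.2⟩
      have hτge : -π ≤ τ s := by
        rcases eq_or_lt_of_le hs.2 with h1 | hsS
        · rw [h1]; exact hβ.1
        · rcases eq_or_lt_of_le hs.1 with h0 | h0
          · rw [← h0]; exact hα.1
          · exact le_of_lt (abs_lt.mp (hshort s ⟨h0, hsS⟩)).1
      have hsin : Real.sin (τ s) ≤ 0 := by
        have h2 := Real.sin_nonneg_of_nonneg_of_le_pi (x := -τ s) (by linarith) (by linarith)
        rw [Real.sin_neg] at h2; linarith
      have h4 := mul_nonneg (neg_nonneg.mpr (by linarith : k c - k s ≤ 0))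
        (neg_nonneg.mpr hsin)
      rw [neg_mul_neg] at h4
      exact h4
  have hc2S : c / 2 ≤ S := by linarith
  have hc2nn : (0:ℝ) ≤ c / 2 := by linarith
  have hgint : ∀ a b : ℝ, a ∈ Set.Icc (0:ℝ) S → b ∈ Set.Icc (0:ℝ) S →
      IntervalIntegrable g MeasureTheory.volume a b := by
    intro a b ha hb
    have hsub : Set.uIcc a b ⊆ Set.Icc 0 S := by
      rw [← huIcc]
      exact Set.uIcc_subset_uIcc (huIcc ▸ ha) (huIcc ▸ hb)
    apply IntervalIntegrable.mul_continuousOn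
    · apply AntitoneOn.intervalIntegrable
      intro x hx y hy hxy
      exact sub_le_sub_left (hk.monotoneOn (hsub hx) (hsub hy) hxy) (k c)
    · exact hsincont.continuousOn
  have hmid : 0 < ∫ s in (0:ℝ)..(c/2), g s := by
    apply intervalIntegral.intervalIntegral_pos_of_pos_on
      (hgint 0 (c/2) ⟨le_refl 0, hS.le⟩ ⟨hc2nn, hc2S⟩)
    · intro x hx
      have hxc : x < c := by linarith [hx.2]
      have hxS : x < S := lt_of_lt_of_le hxc hcS
      have hτpos : 0 < τ x := hpos x ⟨hx.1.le, hxc⟩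
      have hτlt : τ x < π := (abs_lt.mp (hshort x ⟨hx.1, hxS⟩)).2
      have hkx : k x < k c := hk ⟨hx.1.le, hxS.le⟩ hcIcc hxc
      exact mul_pos (by linarith) (Real.sin_pos_of_pos_of_lt_pi hτpos hτlt)
    · linarith
  have htail : 0 ≤ ∫ s in (c/2)..S, g s := by
    apply intervalIntegral.integral_nonneg hc2S
    intro u hu
    exact hg_nonneg u ⟨le_trans hc2nn hu.1, hu.2⟩
  have hsplit : (∫ s in (0:ℝ)..(c/2), g s) + (∫ s in (c/2)..S, g s)
      = ∫ s in (0:ℝ)..S, g s :=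
    intervalIntegral.integral_add_adjacent_intervals
      (hgint 0 (c/2) ⟨le_refl 0, hS.le⟩ ⟨hc2nn, hc2S⟩)
      (hgint (c/2) S ⟨hc2nn, hc2S⟩ ⟨hS.le, le_refl S⟩)
  have hgpos : 0 < ∫ s in (0:ℝ)..S, g s := by rw [← hsplit]; linarith
  -- value of the integral of g
  have hgval : ∫ s in (0:ℝ)..S, g s = Real.cos (τ S) - Real.cos (τ 0) := by
    have hfun : g = fun s => k c * Real.sin (τ s) - k s * Real.sin (τ s) := by
      funext s; simp only [hgdef]; ring
    rw [hfun, intervalIntegral.integral_sub (hsinint.const_mul (k c)) hksin,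
      intervalIntegral.integral_const_mul, hint, hftc]
    ring
  -- contradiction with cosine monotonicity
  have hcos : Real.cos (τ S) ≤ Real.cos (τ 0) := by
    have h1 : Real.cos (-(τ S)) ≤ Real.cos (τ 0) :=
      Real.cos_le_cos_of_nonneg_of_le_pi hα0.le (by linarith [hβ.1]) (by linarith)
    rwa [Real.cos_neg] at h1
  rw [hgval] at hgpos
  linarith

/-- Vogt's theorem for short spirals: if the tangent angle `τ` is `C¹` with strictly
increasing derivative `k` on `[0,S]`, `|τ s| < π` on the interior, boundary angles in
`[-π,π]`, and `∫₀ˢ sin (τ s) ds = 0`, then `τ 0 + τ S > 0`. -/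
theorem vogt_short_spiral (S : ℝ) (τ k : ℝ → ℝ) (hS : 0 < S)
    (hderiv : ∀ s, HasDerivAt τ (k s) s)
    (hk : StrictMonoOn k (Set.Icc 0 S))
    (hshort : ∀ s ∈ Set.Ioo 0 S, |τ s| < π)
    (hα : τ 0 ∈ Set.Icc (-π) π) (hβ : τ S ∈ Set.Icc (-π) π)
    (hint : ∫ s in (0:ℝ)..S, Real.sin (τ s) = 0) :
    0 < τ 0 + τ S := by
  by_contra hcon
  push_neg at hcon
  rcases lt_or_ge 0 (τ 0) with hα0 | hα0
  · exact vogt_aux S τ k hS hderiv hk hshort hα hβ hint hα0 hcon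
  rcases lt_or_ge 0 (τ S) with hβ0 | hβ0
  · -- reverse the parametrization and apply the auxiliary lemma
    set σ : ℝ → ℝ := fun s => τ (S - s) with hσ
    set κ : ℝ → ℝ := fun s => -k (S - s) with hκ
    have hderiv' : ∀ s, HasDerivAt σ (κ s) s := by
      intro s
      have h1 : HasDerivAt (fun s : ℝ => S - s) (-1) s := by
        exact (hasDerivAt_id' (x := s)).const_sub S
      have h2 := (hderiv (S - s)).comp s h1
      simpa [hσ, hκ, mul_comm, Function.comp_def] using h2
    have hk' : StrictMonoOn κ (Set.Icc 0 S) := by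
      intro x hx y hy hxy
      have hx' : S - x ∈ Set.Icc 0 S := ⟨by linarith [hx.2], by linarith [hx.1]⟩
      have hy' : S - y ∈ Set.Icc 0 S := ⟨by linarith [hy.2], by linarith [hy.1]⟩
      have h3 := hk hy' hx' (by linarith)
      simp only [hκ]
      linarith
    have hshort' : ∀ s ∈ Set.Ioo 0 S, |σ s| < π := by
      intro s hs
      exact hshort (S - s) ⟨by linarith [hs.2], by linarith [hs.1]⟩
    have hint' : ∫ s in (0:ℝ)..S, Real.sin (σ s) = 0 := by
      have h4 := intervalIntegral.integral_comp_sub_left (a := 0) (b := S)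
        (fun u => Real.sin (τ u)) S
      simp only [sub_zero, sub_self] at h4
      calc ∫ s in (0:ℝ)..S, Real.sin (σ s) = ∫ s in (0:ℝ)..S, Real.sin (τ (S - s)) := rfl
        _ = ∫ s in (0:ℝ)..S, Real.sin (τ s) := h4
        _ = 0 := hint
    have h0' : σ 0 = τ S := by simp [hσ]
    have hS' : σ S = τ 0 := by simp [hσ]
    exact vogt_aux S σ κ hS hderiv' hk' hshort' (h0' ▸ hβ) (hS' ▸ hα) hint'
      (h0' ▸ hβ0) (by rw [h0', hS']; linarith)
  · -- both endpoint angles nonpositive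
    have hτc : Continuous τ := continuous_iff_continuousAt.mpr fun s => (hderiv s).continuousAt
    have hd : deriv τ = k := funext fun s => (hderiv s).deriv
    have hconv : ConvexOn ℝ (Set.Icc 0 S) τ := by
      have hmono : MonotoneOn (deriv τ) (interior (Set.Icc 0 S)) := by
        rw [hd, interior_Icc]
        exact hk.monotoneOn.mono Set.Ioo_subset_Icc_self
      exact hmono.convexOn_of_deriv (convex_Icc 0 S) hτc.continuousOn
        (fun x _ => (hderiv x).differentiableAt.differentiableWithinAt)
    have hle : ∀ s ∈ Set.Icc 0 S, τ s ≤ 0 := by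
      intro s hs
      have h1 := hconv.le_on_segment ⟨le_refl (0:ℝ), hS.le⟩ ⟨hS.le, le_refl S⟩
        (by rw [segment_eq_Icc hS.le]; exact hs)
      exact h1.trans (max_le hα0 hβ0)
    -- τ is somewhere negative in the interior
    have hex : ∃ s ∈ Set.Ioo (0:ℝ) S, τ s < 0 := by
      by_contra hno
      push_neg at hno
      have hzero : ∀ s ∈ Set.Ioo (0:ℝ) S, τ s = 0 := fun s hs =>
        le_antisymm (hle s ⟨hs.1.le, hs.2.le⟩) (hno s hs)
      have hk0 : ∀ s ∈ Set.Ioo (0:ℝ) S, k s = 0 := by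
        intro s hs
        have hev : (fun _ : ℝ => (0:ℝ)) =ᶠ[nhds s] τ := by
          filter_upwards [isOpen_Ioo.mem_nhds hs] with x hx
          exact (hzero x hx).symm
        have h1 : HasDerivAt (fun _ : ℝ => (0:ℝ)) (k s) s :=
          (hderiv s).congr_of_eventuallyEq hev
        exact h1.unique (hasDerivAt_const s 0)
      have h1 : k (S/3) = 0 := hk0 _ ⟨by linarith, by linarith⟩
      have h2 : k (S/2) = 0 := hk0 _ ⟨by linarith, by linarith⟩
      have h3 := hk (⟨by linarith, by linarith⟩ : S/3 ∈ Set.Icc 0 S)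
        (⟨by linarith, by linarith⟩ : S/2 ∈ Set.Icc 0 S) (by linarith)
      rw [h1, h2] at h3
      exact lt_irrefl 0 h3
    obtain ⟨s₀, hs₀, hτs₀⟩ := hex
    -- a window around s₀ where sin (τ x) < 0
    obtain ⟨δ, hδpos, hδ⟩ := Metric.continuousAt_iff.mp hτc.continuousAt
      (ε := -τ s₀ / 2) (by linarith)
    set δ' := min δ (min s₀ (S - s₀)) with hδ'def
    have hδ'pos : 0 < δ' := lt_min hδpos (lt_min hs₀.1 (by linarith [hs₀.2]))
    have hδ'le : δ' ≤ δ := min_le_left _ _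
    have hδ's : δ' ≤ s₀ := le_trans (min_le_right _ _) (min_le_left _ _)
    have hδ'S : δ' ≤ S - s₀ := le_trans (min_le_right _ _) (min_le_right _ _)
    set u := s₀ - δ' / 2 with hu
    set v := s₀ + δ' / 2 with hv
    have huv : u < v := by simp only [hu, hv]; linarith
    have hu0 : 0 < u := by simp only [hu]; linarith
    have hvS : v < S := by simp only [hv]; linarith
    have hwindow : ∀ x ∈ Set.Ioo u v, Real.sin (τ x) < 0 := by
      intro x hx
      have hdist : dist x s₀ < δ := by
        rw [Real.dist_eq, abs_lt]
        constructor
        · simp only [hu] at hx; linarith [hx.1]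
        · simp only [hv] at hx; linarith [hx.2]
      have h5 := hδ hdist
      rw [Real.dist_eq, abs_lt] at h5
      have hτx : τ x < τ s₀ / 2 := by linarith [h5.2]
      have hxIoo : x ∈ Set.Ioo (0:ℝ) S := ⟨lt_trans hu0 hx.1, lt_trans hx.2 hvS⟩
      have hπ : -π < τ x := (abs_lt.mp (hshort x hxIoo)).1
      exact Real.sin_neg_of_neg_of_neg_pi_lt (by linarith) hπ
    have hsincont : Continuous fun s => Real.sin (τ s) := Real.continuous_sin.comp hτc
    have hsin_nonpos : ∀ s ∈ Set.Icc 0 S, Real.sin (τ s) ≤ 0 := by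
      intro s hs
      have h1 : τ s ≤ 0 := hle s hs
      have h2 : -π ≤ τ s := by
        rcases eq_or_lt_of_le hs.1 with h0 | h0
        · rw [← h0]; exact hα.1
        rcases eq_or_lt_of_le hs.2 with h1' | hsS
        · rw [h1']; exact hβ.1
        · exact le_of_lt (abs_lt.mp (hshort s ⟨h0, hsS⟩)).1
      have h3 := Real.sin_nonneg_of_nonneg_of_le_pi (x := -τ s) (by linarith) (by linarith)
      rw [Real.sin_neg] at h3; linarith
    have i1 : IntervalIntegrable (fun s => -Real.sin (τ s)) MeasureTheory.volume 0 u :=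
      (hsincont.neg).intervalIntegrable _ _
    have i2 : IntervalIntegrable (fun s => -Real.sin (τ s)) MeasureTheory.volume u v :=
      (hsincont.neg).intervalIntegrable _ _
    have i3 : IntervalIntegrable (fun s => -Real.sin (τ s)) MeasureTheory.volume v S :=
      (hsincont.neg).intervalIntegrable _ _
    have i12 : IntervalIntegrable (fun s => -Real.sin (τ s)) MeasureTheory.volume 0 v :=
      (hsincont.neg).intervalIntegrable _ _
    have hA : 0 ≤ ∫ s in (0:ℝ)..u, -Real.sin (τ s) := by
      apply intervalIntegral.integral_nonneg hu0.le
      intro x hx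
      have := hsin_nonpos x ⟨hx.1, by linarith [hx.2, hvS.le, huv.le]⟩
      linarith
    have hB : 0 < ∫ s in u..v, -Real.sin (τ s) := by
      apply intervalIntegral.intervalIntegral_pos_of_pos_on i2 _ huv
      intro x hx
      linarith [hwindow x hx]
    have hC : 0 ≤ ∫ s in v..S, -Real.sin (τ s) := by
      apply intervalIntegral.integral_nonneg hvS.le
      intro x hx
      have := hsin_nonpos x ⟨by linarith [hx.1, hu0.le, huv.le], hx.2⟩
      linarith
    have e1 := intervalIntegral.integral_add_adjacent_intervals i1 i2
    have e2 := intervalIntegral.integral_add_adjacent_intervals i12 i3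
    have hposint : 0 < ∫ s in (0:ℝ)..S, -Real.sin (τ s) := by
      rw [← e2, ← e1]; linarith
    rw [intervalIntegral.integral_neg, hint] at hposint
    simp at hposint
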